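/- For every α > 1 there exist value functions with n = 2 agents and k = 2 signals that are nondecreasing in each coordinate, admit no α-deterministic conflict pair, and are not α-single crossing. Concretely, the functions v₁(1,1) = v₁(2,1) = 1/α, v₁(1,2) = v₁(2,2) = 1, v₂(1,1) = v₂(1,2) = 1/α², v₂(2,1) = 1/α, v₂(2,2) = 1 are nondecreasing in each coordinate, have no α-deterministic conflict pair, and fail the α-single crossing condition. -/
import Mathlib


namespace Stmt14

/-- Performance ratio of agent 1. -/
noncomputable def rho1 (v1 v2 : Fin 2 × Fin 2 → ℝ) (s : Fin 2 × Fin 2) : ℝ :=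
  v1 s / max (v1 s) (v2 s)

/-- Performance ratio of agent 2. -/
noncomputable def rho2 (v1 v2 : Fin 2 × Fin 2 → ℝ) (s : Fin 2 × Fin 2) : ℝ :=
  v2 s / max (v1 s) (v2 s)

/-- One step of the reachability relation. -/
def step (v1 v2 : Fin 2 × Fin 2 → ℝ) (p q : Fin 2 × Fin 2) : Prop :=
  (p.2 = q.2 ∧ v1 p < v1 q) ∨ (p.1 = q.1 ∧ v2 q < v2 p)

/-- The concrete value function of agent 1: `v₁(s₁,1) = 1/α`, `v₁(s₁,2) = 1`
(signal `1` is `(0 : Fin 2)` and signal `2` is `(1 : Fin 2)`). -/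
noncomputable def v1ex (α : ℝ) : Fin 2 × Fin 2 → ℝ :=
  fun p => if p.2 = 0 then α⁻¹ else 1

/-- The concrete value function of agent 2: `v₂(1,·) = 1/α²`, `v₂(2,1) = 1/α`,
`v₂(2,2) = 1`. -/
noncomputable def v2ex (α : ℝ) : Fin 2 × Fin 2 → ℝ :=
  fun p => if p.1 = 0 then (α ^ 2)⁻¹ else if p.2 = 0 then α⁻¹ else 1

/-- for every `α > 1`, the concrete value functions above are positive,
nondecreasing in each coordinate, have no `α`-deterministic conflict pair, and fail the
`α`-single-crossing condition. -/
theorem stmt14 (α : ℝ) (hα : 1 < α) :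
    (∀ p, 0 < v1ex α p) ∧ (∀ p, 0 < v2ex α p) ∧
    Monotone (v1ex α) ∧ Monotone (v2ex α) ∧
    (∀ s s', Relation.TransGen (step (v1ex α) (v2ex α)) s s' →
      1 / α ≤ max (rho2 (v1ex α) (v2ex α) s) (rho1 (v1ex α) (v2ex α) s')) ∧
    ¬ ((∀ (s : Fin 2 × Fin 2) (t : Fin 2), s.1 ≤ t →
          v2ex α (t, s.2) - v2ex α s ≤ α * (v1ex α (t, s.2) - v1ex α s)) ∧
       (∀ (s : Fin 2 × Fin 2) (t : Fin 2), s.2 ≤ t →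
          v1ex α (s.1, t) - v1ex α s ≤ α * (v2ex α (s.1, t) - v2ex α s))) := by

  have h0 : (0:ℝ) < α := lt_trans one_pos hα
  have hinv : α⁻¹ ≤ 1 := by
    rw [inv_le_one_iff₀]; right; exact le_of_lt hα
  have hinv0 : (0:ℝ) < α⁻¹ := inv_pos.mpr h0
  have hsq0 : (0:ℝ) < (α ^ 2)⁻¹ := inv_pos.mpr (by positivity)
  have hsqinv : (α ^ 2)⁻¹ ≤ α⁻¹ := by
    apply inv_anti₀ h0
    nlinarith
  have hsq1 : (α ^ 2)⁻¹ ≤ 1 := le_trans hsqinv hinv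
  have hle : ∀ p, v2ex α p ≤ v1ex α p := by
    intro ⟨a, b⟩
    fin_cases a <;> fin_cases b <;> simp [v1ex, v2ex, hsqinv, hsq1, hinv]
  have hp1 : ∀ p, 0 < v1ex α p := by
    intro ⟨a, b⟩; fin_cases a <;> fin_cases b <;> simp [v1ex, hinv0]
  have hp2 : ∀ p, 0 < v2ex α p := by
    intro ⟨a, b⟩; fin_cases a <;> fin_cases b <;> simp [v2ex, hinv0, hsq0]
  refine ⟨hp1, hp2, ?_, ?_, ?_, ?_⟩
  · intro ⟨a, b⟩ ⟨c, d⟩ h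
    obtain ⟨h1, h2⟩ := h
    simp only at h1 h2
    fin_cases a <;> fin_cases b <;> fin_cases c <;> fin_cases d <;>
      simp_all [v1ex, hinv] <;> omega
  · intro ⟨a, b⟩ ⟨c, d⟩ h
    obtain ⟨h1, h2⟩ := h
    simp only at h1 h2
    fin_cases a <;> fin_cases b <;> fin_cases c <;> fin_cases d <;>
      simp_all [v2ex, hinv, hsqinv, hsq1] <;> omega
  · intro s s' _
    have hr : rho1 (v1ex α) (v2ex α) s' = 1 := by
      unfold rho1
      rw [max_eq_left (hle s'), div_self (ne_of_gt (hp1 s'))]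
    rw [hr]
    calc 1 / α ≤ 1 := by rw [one_div]; exact hinv
    _ ≤ max (rho2 (v1ex α) (v2ex α) s) 1 := le_max_right _ _
  · rintro ⟨h1, -⟩
    have := h1 (0, 0) 1 (by simp)
    simp [v1ex, v2ex] at this
    have hlt : (α ^ 2)⁻¹ < α⁻¹ := by
      apply inv_strictAnti₀ h0
      nlinarith
    linarith


end Stmt14
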